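/- Let T > 0 and let S = ⋃_{k∈ℕ} (kT, (k+1)T) ⊆ (0,∞). Let Z : [0,∞) → ℝ be continuous, twice differentiable at every point of S, and suppose there is M ≥ 0 with |Z''(t)| ≤ M for all t ∈ S. If Z(t) → 0 as t → ∞, then Z'(t) → 0 as t → ∞ along S, i.e., for every ε > 0 there exists t₀ such that |Z'(t)| < ε for all t ∈ S with t ≥ t₀. -/

import Mathlib

open Set Filter MeasureTheory

lemma aux_left (Z Z' Z'' : ℝ → ℝ) (M : ℝ) (hM : 0 ≤ M) (a b : ℝ) (hab : a < b)
    (hd : ∀ x ∈ Icc a b, HasDerivAt Z (Z' x) x)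
    (hd2 : ∀ x ∈ Icc a b, HasDerivAt Z' (Z'' x) x)
    (hb : ∀ x ∈ Icc a b, |Z'' x| ≤ M) :
    |Z' a| ≤ |Z b - Z a| / (b - a) + M * (b - a) := by
  obtain ⟨ξ, hξ, hξeq⟩ := exists_hasDerivAt_eq_slope Z Z' hab
    (fun x hx => (hd x hx).continuousAt.continuousWithinAt)
    (fun x hx => hd x (Ioo_subset_Icc_self hx))
  obtain ⟨η, hη, hηeq⟩ := exists_hasDerivAt_eq_slope Z' Z'' hξ.1
    (fun x hx => (hd2 x ⟨hx.1, hx.2.trans hξ.2.le⟩).continuousAt.continuousWithinAt)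
    (fun x hx => hd2 x ⟨hx.1.le, hx.2.le.trans hξ.2.le⟩)
  have hξa : (0:ℝ) < ξ - a := by linarith [hξ.1]
  have h1 : Z' a = Z' ξ - Z'' η * (ξ - a) := by
    field_simp at hηeq
    linarith
  have h2 : |Z' a| ≤ |Z' ξ| + |Z'' η| * (ξ - a) := by
    rw [h1]
    calc |Z' ξ - Z'' η * (ξ - a)| ≤ |Z' ξ| + |Z'' η * (ξ - a)| := abs_sub _ _
      _ = |Z' ξ| + |Z'' η| * (ξ - a) := by rw [abs_mul, abs_of_pos hξa]
  have h3 : |Z' ξ| = |Z b - Z a| / (b - a) := by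
    rw [hξeq, abs_div, abs_of_pos (by linarith : (0:ℝ) < b - a)]
  have h4 : |Z'' η| * (ξ - a) ≤ M * (b - a) := by
    have := hb η ⟨hη.1.le, hη.2.le.trans hξ.2.le⟩
    have h5 : ξ - a ≤ b - a := by linarith [hξ.2]
    nlinarith [abs_nonneg (Z'' η)]
  linarith

lemma aux_right (Z Z' Z'' : ℝ → ℝ) (M : ℝ) (hM : 0 ≤ M) (a b : ℝ) (hab : a < b)
    (hd : ∀ x ∈ Icc a b, HasDerivAt Z (Z' x) x)
    (hd2 : ∀ x ∈ Icc a b, HasDerivAt Z' (Z'' x) x)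
    (hb : ∀ x ∈ Icc a b, |Z'' x| ≤ M) :
    |Z' b| ≤ |Z b - Z a| / (b - a) + M * (b - a) := by
  obtain ⟨ξ, hξ, hξeq⟩ := exists_hasDerivAt_eq_slope Z Z' hab
    (fun x hx => (hd x hx).continuousAt.continuousWithinAt)
    (fun x hx => hd x (Ioo_subset_Icc_self hx))
  obtain ⟨η, hη, hηeq⟩ := exists_hasDerivAt_eq_slope Z' Z'' hξ.2
    (fun x hx => (hd2 x ⟨hξ.1.le.trans hx.1, hx.2⟩).continuousAt.continuousWithinAt)
    (fun x hx => hd2 x ⟨hξ.1.le.trans hx.1.le, hx.2.le⟩)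
  have hξb : (0:ℝ) < b - ξ := by linarith [hξ.2]
  have h1 : Z' b = Z' ξ + Z'' η * (b - ξ) := by
    field_simp at hηeq
    linarith
  have h2 : |Z' b| ≤ |Z' ξ| + |Z'' η| * (b - ξ) := by
    rw [h1]
    calc |Z' ξ + Z'' η * (b - ξ)| ≤ |Z' ξ| + |Z'' η * (b - ξ)| := abs_add_le _ _
      _ = |Z' ξ| + |Z'' η| * (b - ξ) := by rw [abs_mul, abs_of_pos hξb]
  have h3 : |Z' ξ| = |Z b - Z a| / (b - a) := by
    rw [hξeq, abs_div, abs_of_pos (by linarith : (0:ℝ) < b - a)]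
  have h4 : |Z'' η| * (b - ξ) ≤ M * (b - a) := by
    have := hb η ⟨hξ.1.le.trans hη.1.le, hη.2.le⟩
    have h5 : b - ξ ≤ b - a := by linarith [hξ.1]
    nlinarith [abs_nonneg (Z'' η)]
  linarith

/-- if `Z → 0` at infinity and `Z''` is bounded off the grid points `kT`,
then `Z' → 0` at infinity along `S`. -/
theorem first_derivative_tendsto_zero
    (T : ℝ) (hT : 0 < T)
    (S : Set ℝ) (hS : S = ⋃ k : ℕ, Ioo ((k:ℝ)*T) (((k:ℝ)+1)*T))
    (Z Z' Z'' : ℝ → ℝ)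
    (hZc : ContinuousOn Z (Ici 0))
    (hZd : ∀ t ∈ S, HasDerivAt Z (Z' t) t)
    (hZd2 : ∀ t ∈ S, HasDerivAt Z' (Z'' t) t)
    (M : ℝ) (hM : 0 ≤ M) (hbound : ∀ t ∈ S, |Z'' t| ≤ M)
    (hlim : Tendsto Z atTop (nhds 0)) :
    ∀ ε > 0, ∃ t₀ : ℝ, ∀ t ∈ S, t₀ ≤ t → |Z' t| < ε := by
  intro ε hε
  set h : ℝ := min (T/4) (ε/(2*(M+1))) with hh_def
  have hh : 0 < h := lt_min (by linarith) (by positivity)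
  have hhT : h ≤ T/4 := min_le_left _ _
  have hhε : h ≤ ε/(2*(M+1)) := min_le_right _ _
  have hMh : M * h < ε / 2 := by
    have : M * h ≤ M * (ε/(2*(M+1))) := mul_le_mul_of_nonneg_left hhε hM
    have h2 : M * (ε/(2*(M+1))) < ε / 2 := by
      rw [← mul_div_assoc, div_lt_div_iff₀ (by positivity) (by norm_num)]
      nlinarith
    linarith
  rw [Metric.tendsto_atTop] at hlim
  obtain ⟨N, hN⟩ := hlim (ε*h/4) (by positivity)
  have hN' : ∀ s ≥ N, |Z s| < ε*h/4 := by
    intro s hs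
    have := hN s hs
    rwa [Real.dist_eq, sub_zero] at this
  refine ⟨N + h, fun t ht htN => ?_⟩
  rw [hS, mem_iUnion] at ht
  obtain ⟨k, hk⟩ := ht
  have hk1 : (k:ℝ)*T < t := hk.1
  have hk2 : t < (k:ℝ)*T + T := by have := hk.2; linarith [hk.2]
  have hmemS : ∀ x, (k:ℝ)*T < x → x < (k:ℝ)*T + T → x ∈ S := by
    intro x hx1 hx2
    rw [hS, mem_iUnion]
    exact ⟨k, hx1, by push_cast; linarith⟩
  have htN' : N ≤ t - h := by linarith
  by_cases hcase : t < (k:ℝ)*T + T/2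
  · -- go right
    have hsub : Icc t (t+h) ⊆ S := by
      intro x hx
      exact hmemS x (by linarith [hx.1]) (by linarith [hx.2])
    have key := aux_left Z Z' Z'' M hM t (t+h) (by linarith)
      (fun x hx => hZd x (hsub hx)) (fun x hx => hZd2 x (hsub hx))
      (fun x hx => hbound x (hsub hx))
    have hZ1 : |Z (t+h)| < ε*h/4 := hN' _ (by linarith)
    have hZ2 : |Z t| < ε*h/4 := hN' _ (by linarith)
    have habs : |Z (t+h) - Z t| < ε*h/2 := by
      calc |Z (t+h) - Z t| ≤ |Z (t+h)| + |Z t| := abs_sub _ _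
        _ < ε*h/2 := by linarith
    have hq : |Z (t+h) - Z t| / (t+h-t) < ε/2 := by
      rw [show t+h-t = h by ring, div_lt_iff₀ hh]
      nlinarith
    calc |Z' t| ≤ |Z (t+h) - Z t| / (t+h-t) + M * (t+h-t) := key
      _ < ε := by rw [show t+h-t = h by ring] at hq ⊢; linarith
  · -- go left
    push_neg at hcase
    have hsub : Icc (t-h) t ⊆ S := by
      intro x hx
      exact hmemS x (by linarith [hx.1]) (by linarith [hx.2])
    have key := aux_right Z Z' Z'' M hM (t-h) t (by linarith)
      (fun x hx => hZd x (hsub hx)) (fun x hx => hZd2 x (hsub hx))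
      (fun x hx => hbound x (hsub hx))
    have hZ1 : |Z (t-h)| < ε*h/4 := hN' _ (by linarith)
    have hZ2 : |Z t| < ε*h/4 := hN' _ (by linarith)
    have habs : |Z t - Z (t-h)| < ε*h/2 := by
      calc |Z t - Z (t-h)| ≤ |Z t| + |Z (t-h)| := abs_sub _ _
        _ < ε*h/2 := by linarith
    have hq : |Z t - Z (t-h)| / (t-(t-h)) < ε/2 := by
      rw [show t-(t-h) = h by ring, div_lt_iff₀ hh]
      nlinarith
    calc |Z' t| ≤ |Z t - Z (t-h)| / (t-(t-h)) + M * (t-(t-h)) := key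
      _ < ε := by rw [show t-(t-h) = h by ring] at hq ⊢; linarith
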